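/- Let T ≥ 2 and suppose real numbers e_{ij} (i ≠ j, i,j ∈ [T]) and ρ̄_{ij} satisfy: (i) every cycle of distinct indices has ∑_ℓ (ρ̄_{i_ℓ i_{ℓ+1}} − 1) ≥ η for some η > 0, and (ii) e_{ij} ≥ ρ̄_{ij} − η/(2T) for all i ≠ j. Then there exist real numbers U_1,...,U_T and λ_1,...,λ_T > 0 such that U_j ≤ U_i + λ_i (e_{ij} − 1) for all i ≠ j (the Afriat inequalities are feasible). -/

import Mathlib

open Finset

/-- Feasibility of the Afriat inequalities: if every cycle of distinct indices
satisfies `∑ (ρ̄ - 1) ≥ η > 0`, and the coefficients satisfy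
`e i j ≥ ρ̄ i j - η/(2T)` for `i ≠ j`, then there exist `U` and `λ > 0` with
`U j ≤ U i + λ i * (e i j - 1)` for all `i ≠ j`. -/
theorem afriat_feasible (T : ℕ) (hT : 2 ≤ T)
    (η : ℝ) (hη : 0 < η) (ρbar e : Fin T → Fin T → ℝ)
    (hcyc : ∀ (L : ℕ), ∀ f : Fin (L + 2) → Fin T, Function.Injective f →
      η ≤ ∑ ℓ : Fin (L + 2), (ρbar (f ℓ) (f (ℓ + 1)) - 1))
    (he : ∀ i j, i ≠ j → ρbar i j - η / (2 * T) ≤ e i j) :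
    ∃ (U : Fin T → ℝ) (lam : Fin T → ℝ), (∀ i, 0 < lam i) ∧
      ∀ i j, i ≠ j → U j ≤ U i + lam i * (e i j - 1) := by
  have hT0 : (0:ℝ) < T := by exact_mod_cast Nat.lt_of_lt_of_le (by norm_num) hT
  set cbar : Fin T → Fin T → ℝ := fun a b => ρbar a b - 1 - η / (2 * T) with hcbar
  -- the set of costs of injective paths ending at j
  set S : Fin T → Set ℝ := fun j =>
    { x | ∃ (n : ℕ) (g : ℕ → Fin T), (∀ a b, a ≤ n → b ≤ n → g a = g b → a = b) ∧
      g n = j ∧ x = ∑ ℓ ∈ Finset.range n, cbar (g ℓ) (g (ℓ + 1)) } with hS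
  -- a uniform bound on |cbar|
  obtain ⟨M, hM⟩ : ∃ M : ℝ, ∀ a b : Fin T, |cbar a b| ≤ M := by
    obtain ⟨M, hM⟩ := Finite.exists_le (fun p : Fin T × Fin T => |cbar p.1 p.2|)
    exact ⟨M, fun a b => hM (a, b)⟩
  -- any injective path has length bound n ≤ T
  have hlen : ∀ (n : ℕ) (g : ℕ → Fin T),
      (∀ a b, a ≤ n → b ≤ n → g a = g b → a = b) → n + 1 ≤ T := by
    intro n g hg
    have := Finset.card_le_card_of_injOn g
      (s := Finset.range (n+1)) (t := Finset.univ)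
      (fun _ _ => Finset.mem_univ _)
      (fun a ha b hb hab => by
        simp only [Finset.coe_range, Set.mem_Iio] at ha hb
        exact hg a b (by omega) (by omega) hab)
    simpa using this
  -- S j is bounded below
  have hbdd : ∀ j, BddBelow (S j) := by
    intro j
    refine ⟨-(T * M), ?_⟩
    rintro x ⟨n, g, hg, hgn, rfl⟩
    have hnT : (n : ℝ) ≤ T := by
      have := hlen n g hg; exact_mod_cast Nat.le_of_succ_le this
    have h1 : ∀ ℓ ∈ Finset.range n, -M ≤ cbar (g ℓ) (g (ℓ+1)) := by
      intro ℓ _; have := hM (g ℓ) (g (ℓ+1)); exact neg_le_of_abs_le this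
    have h2 : ∑ ℓ ∈ Finset.range n, (-M) ≤ ∑ ℓ ∈ Finset.range n, cbar (g ℓ) (g (ℓ+1)) :=
      Finset.sum_le_sum h1
    have hM0 : 0 ≤ M := le_trans (abs_nonneg _) (hM ⟨0, by omega⟩ ⟨0, by omega⟩)
    have : (n : ℝ) * M ≤ (T : ℝ) * M := mul_le_mul_of_nonneg_right hnT hM0
    simp only [Finset.sum_const, Finset.card_range, nsmul_eq_mul] at h2
    nlinarith
  -- S j is nonempty, containing 0
  have hS0 : ∀ j, (0:ℝ) ∈ S j := by
    intro j
    exact ⟨0, fun _ => j, fun a b ha hb _ => by omega, rfl, by simp⟩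
  set U : Fin T → ℝ := fun j => sInf (S j) with hU
  -- key step inequality
  have hstep : ∀ i j, i ≠ j → U j ≤ U i + cbar i j := by
    intro i j hij
    have key : ∀ x ∈ S i, U j ≤ x + cbar i j := by
      rintro x ⟨n, g, hg, hgn, rfl⟩
      by_cases hj : ∃ m, m ≤ n ∧ g m = j
      · -- truncate the path at the first occurrence of j; the cut cycle has positive weight
        obtain ⟨m, hm, hgm⟩ := hj
        have hmn : m < n := by
          rcases lt_or_eq_of_le hm with h | h
          · exact h
          · exfalso; apply hij; rw [← hgn, ← hgm, h]
        -- truncated path is in S j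
        have hmem : (∑ ℓ ∈ Finset.range m, cbar (g ℓ) (g (ℓ+1))) ∈ S j :=
          ⟨m, g, fun a b ha hb hab => hg a b (by omega) (by omega) hab, hgm, rfl⟩
        have hUle : U j ≤ ∑ ℓ ∈ Finset.range m, cbar (g ℓ) (g (ℓ+1)) :=
          csInf_le (hbdd j) hmem
        -- split the sum
        have hsplit : ∑ ℓ ∈ Finset.range n, cbar (g ℓ) (g (ℓ+1)) =
            (∑ ℓ ∈ Finset.range m, cbar (g ℓ) (g (ℓ+1))) +
            ∑ ℓ ∈ Finset.Ico m n, cbar (g ℓ) (g (ℓ+1)) := by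
          rw [Finset.range_eq_Ico, Finset.range_eq_Ico]
          exact (Finset.sum_Ico_consecutive (fun ℓ => cbar (g ℓ) (g (ℓ+1))) (Nat.zero_le m) (le_of_lt hmn)).symm
        -- the cycle inequality
        obtain ⟨d, hd⟩ : ∃ d, n = m + d + 1 := ⟨n - m - 1, by omega⟩
        subst hd
        have hcycle : η ≤ (∑ ℓ ∈ Finset.Ico m (m + d + 1), (ρbar (g ℓ) (g (ℓ+1)) - 1)) +
            (ρbar i j - 1) := by
          have hinj : Function.Injective (fun ℓ : Fin (d + 2) => g (m + ℓ.val)) := by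
            intro a b hab
            have := hg (m + a.val) (m + b.val) (by omega) (by omega) hab
            exact Fin.ext (by omega)
          have := hcyc d (fun ℓ : Fin (d + 2) => g (m + ℓ.val)) hinj
          rw [Fin.sum_univ_castSucc] at this
          have hlast : (Fin.last (d+1) : Fin (d+2)) + 1 = 0 := by
            simp [Fin.ext_iff, Fin.add_def]
          rw [hlast] at this
          simp only [Fin.val_last, Fin.val_zero, Nat.add_zero] at this
          have hgi : g (m + (d + 1)) = i := by rw [← hgn]; ring_nf
          rw [hgi, hgm] at this
          have hmid : ∀ ℓ : Fin (d+1),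
              (ρbar (g (m + (ℓ.castSucc : Fin (d+2)).val))
                (g (m + ((ℓ.castSucc : Fin (d+2)) + 1).val)) - 1) =
              (ρbar (g (m + ℓ.val)) (g (m + ℓ.val + 1)) - 1) := by
            intro ℓ
            rw [Fin.coeSucc_eq_succ]
            simp [Fin.val_succ]
            ring_nf
          rw [Finset.sum_congr rfl (fun ℓ _ => hmid ℓ)] at this
          have hre : ∑ ℓ : Fin (d+1), (ρbar (g (m + ℓ.val)) (g (m + ℓ.val + 1)) - 1) =
              ∑ ℓ ∈ Finset.Ico m (m + d + 1), (ρbar (g ℓ) (g (ℓ+1)) - 1) := by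
            rw [Finset.sum_Ico_eq_sum_range]
            have : m + d + 1 - m = d + 1 := by omega
            rw [this, ← Fin.sum_univ_eq_sum_range]
          rw [hre] at this
          exact this
        -- cardinality bound on the cycle length
        have hcard : (d : ℝ) + 2 ≤ T := by
          have := hlen (m + d + 1) g hg
          have : d + 2 ≤ T := by omega
          exact_mod_cast this
        have hslack : 0 < η / (2 * T) := by positivity
        -- sum of cbar over the cycle
        have hsum_cbar : ∑ ℓ ∈ Finset.Ico m (m + d + 1), cbar (g ℓ) (g (ℓ+1)) =
            (∑ ℓ ∈ Finset.Ico m (m + d + 1), (ρbar (g ℓ) (g (ℓ+1)) - 1)) -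
            (d + 1) * (η / (2 * T)) := by
          rw [hcbar]
          rw [Finset.sum_sub_distrib, Finset.sum_const, Nat.card_Ico]
          have : m + d + 1 - m = d + 1 := by omega
          rw [this]
          norm_num
        have hpos : 0 ≤ (∑ ℓ ∈ Finset.Ico m (m + d + 1), cbar (g ℓ) (g (ℓ+1))) + cbar i j := by
          rw [hsum_cbar, hcbar]
          have h1 : ((d:ℝ) + 2) * (η / (2 * T)) ≤ (T : ℝ) * (η / (2 * T)) :=
            mul_le_mul_of_nonneg_right hcard (le_of_lt hslack)
          have h2 : (T : ℝ) * (η / (2 * T)) = η / 2 := by field_simp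
          simp only
          nlinarith [hcycle]
        calc U j ≤ ∑ ℓ ∈ Finset.range m, cbar (g ℓ) (g (ℓ+1)) := hUle
          _ ≤ (∑ ℓ ∈ Finset.range (m + d + 1), cbar (g ℓ) (g (ℓ+1))) + cbar i j := by
              rw [hsplit]; linarith
      · -- extend the path by the edge (i, j)
        push_neg at hj
        set g' : ℕ → Fin T := fun a => if a ≤ n then g a else j with hg'
        have hg'inj : ∀ a b, a ≤ n + 1 → b ≤ n + 1 → g' a = g' b → a = b := by
          intro a b ha hb hab
          rw [hg'] at hab
          simp only at hab
          by_cases h1 : a ≤ n <;> by_cases h2 : b ≤ n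
          · rw [if_pos h1, if_pos h2] at hab; exact hg a b h1 h2 hab
          · rw [if_pos h1, if_neg h2] at hab; exact absurd hab (hj a h1)
          · rw [if_neg h1, if_pos h2] at hab; exact absurd hab.symm (hj b h2)
          · omega
        have hg'n : g' (n + 1) = j := by rw [hg']; simp
        have hmem : (∑ ℓ ∈ Finset.range n, cbar (g ℓ) (g (ℓ+1))) + cbar i j ∈ S j := by
          refine ⟨n + 1, g', hg'inj, hg'n, ?_⟩
          rw [Finset.sum_range_succ]
          have h1 : ∀ ℓ ∈ Finset.range n, cbar (g' ℓ) (g' (ℓ+1)) = cbar (g ℓ) (g (ℓ+1)) := by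
            intro ℓ hℓ
            simp only [Finset.mem_range] at hℓ
            rw [hg']
            simp only
            rw [if_pos (by omega : ℓ ≤ n), if_pos (by omega : ℓ + 1 ≤ n)]
          rw [Finset.sum_congr rfl h1]
          have h2 : g' n = i := by rw [hg']; simp [hgn]
          rw [h2, hg'n]
        exact csInf_le (hbdd j) hmem
    have : U j - cbar i j ≤ U i := by
      apply le_csInf ⟨0, hS0 i⟩
      intro x hx
      linarith [key x hx]
    linarith
  refine ⟨U, fun _ => 1, fun _ => one_pos, ?_⟩
  intro i j hij
  show U j ≤ U i + 1 * (e i j - 1)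
  have h1 := hstep i j hij
  have h2 := he i j hij
  have : cbar i j ≤ e i j - 1 := by rw [hcbar]; simp only; linarith
  linarith
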